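/- Let μ₁, μ₂, β > 0 and define V₂(z) = -2·log(1 + (μ₂/8)(1 + β/√(μ₁μ₂))·|z|²) and V₁(z) = V₂(z) - log(μ₁/μ₂) on ℝ². Then (V₁, V₂) solves the system -ΔV₁ = μ₁e^{V₁} + β·e^{(V₁+V₂)/2} and -ΔV₂ = μ₂e^{V₂} + β·e^{(V₁+V₂)/2} on ℝ². -/

import Mathlib

/-- The Laplacian of a real-valued function on `ℝ²`. -/
noncomputable def laplacian (f : EuclideanSpace ℝ (Fin 2) → ℝ)
    (z : EuclideanSpace ℝ (Fin 2)) : ℝ :=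
  ∑ i : Fin 2,
    fderiv ℝ (fun w => fderiv ℝ f w (EuclideanSpace.single i 1)) z (EuclideanSpace.single i 1)

open Real

local notation "E" => EuclideanSpace ℝ (Fin 2)

lemma aux_hder (c : ℝ) (hc : 0 < c) (f : E → ℝ)
    (hf : ∀ w, f w = -2 * Real.log (1 + c * ‖w‖ ^ 2)) (w : E) :
    HasFDerivAt f ((-4 * c / (1 + c * ‖w‖ ^ 2)) • (innerSL ℝ w)) w := by
  have hfe : f = fun w => -2 * Real.log (1 + c * ‖w‖ ^ 2) := funext hf
  have hpos : 0 < 1 + c * ‖w‖ ^ 2 := by positivity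
  have h1 : HasFDerivAt (fun w : E => ‖w‖ ^ 2) ((2:ℕ) • innerSL ℝ w) w :=
    (hasStrictFDerivAt_norm_sq w).hasFDerivAt
  have h2 : HasFDerivAt (fun w : E => 1 + c * ‖w‖ ^ 2) (c • ((2:ℕ) • innerSL ℝ w)) w :=
    (h1.const_mul c).const_add 1
  have h3 := (Real.hasDerivAt_log hpos.ne').comp_hasFDerivAt w h2
  have h4 := h3.const_mul (-2)
  rw [hfe]
  refine h4.congr_fderiv ?_
  ext v
  simp only [ContinuousLinearMap.smul_apply, smul_eq_mul, nsmul_eq_mul, Nat.cast_ofNat]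
  rw [div_eq_mul_inv]
  ring

lemma aux_lap (c : ℝ) (hc : 0 < c) (f : E → ℝ)
    (hf : ∀ w, f w = -2 * Real.log (1 + c * ‖w‖ ^ 2)) (z : E) :
    laplacian f z = -8 * c / (1 + c * ‖z‖ ^ 2) ^ 2 := by
  have hpos : ∀ w : E, 0 < 1 + c * ‖w‖ ^ 2 := fun w => by positivity
  have hfun : ∀ i : Fin 2, (fun w => fderiv ℝ f w (EuclideanSpace.single i 1))
      = fun w : E => -4 * c / (1 + c * ‖w‖ ^ 2) * w i := by
    intro i
    funext w
    rw [(aux_hder c hc f hf w).fderiv]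
    have hip : (inner ℝ w (EuclideanSpace.single i (1:ℝ)) : ℝ) = w i := by
      rw [real_inner_comm, EuclideanSpace.inner_single_left]; simp
    simp only [ContinuousLinearMap.smul_apply, innerSL_apply_apply, smul_eq_mul, hip]
  -- second derivative of each coordinate function
  have hsd : ∀ i : Fin 2,
      fderiv ℝ (fun w : E => -4 * c / (1 + c * ‖w‖ ^ 2) * w i) z (EuclideanSpace.single i 1)
      = -4 * c / (1 + c * ‖z‖ ^ 2)
        + z i * (-4 * c * (-(((1 + c * ‖z‖ ^ 2) ^ 2)⁻¹) * (c * (2 * z i)))) := by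
    intro i
    have h1 : HasFDerivAt (fun w : E => ‖w‖ ^ 2) ((2:ℕ) • innerSL ℝ z) z :=
      (hasStrictFDerivAt_norm_sq z).hasFDerivAt
    have h2 : HasFDerivAt (fun w : E => 1 + c * ‖w‖ ^ 2) (c • ((2:ℕ) • innerSL ℝ z)) z :=
      (h1.const_mul c).const_add 1
    have hinv := (hasDerivAt_inv (hpos z).ne').comp_hasFDerivAt z h2
    have hu := hinv.const_mul (-4 * c)
    have hproj : HasFDerivAt (fun w : E => w i) (EuclideanSpace.proj (𝕜 := ℝ) i) z :=
      (EuclideanSpace.proj (𝕜 := ℝ) i).hasFDerivAt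
    have hmul := hu.mul hproj
    have : (fun w : E => -4 * c / (1 + c * ‖w‖ ^ 2) * w i)
        = fun w : E => -4 * c * (1 + c * ‖w‖ ^ 2)⁻¹ * w i := by
      funext w; rw [div_eq_mul_inv]
    rw [this, (show HasFDerivAt (fun w : E => -4 * c * (1 + c * ‖w‖ ^ 2)⁻¹ * w i)
      ((-4 * c * (1 + c * ‖z‖ ^ 2)⁻¹) • (EuclideanSpace.proj (𝕜 := ℝ) i) +
        z i • (-4 * c) • -(((1 + c * ‖z‖ ^ 2) ^ 2)⁻¹) • c • ((2:ℕ) • innerSL ℝ z)) z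
      from hmul).fderiv]
    simp only [ContinuousLinearMap.add_apply, ContinuousLinearMap.smul_apply, smul_eq_mul,
      ContinuousLinearMap.comp_apply, nsmul_eq_mul, Nat.cast_ofNat, innerSL_apply_apply]
    have hip : (inner ℝ z (EuclideanSpace.single i (1:ℝ)) : ℝ) = z i := by
      rw [real_inner_comm]; simp [EuclideanSpace.inner_single_left]
    have hpr : (EuclideanSpace.proj (𝕜 := ℝ) i) (EuclideanSpace.single i (1:ℝ)) = 1 := by
      simp
    rw [hip, hpr]
    field_simp
  have hnorm : ‖z‖ ^ 2 = z 0 ^ 2 + z 1 ^ 2 := by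
    rw [EuclideanSpace.norm_eq, Real.sq_sqrt (by positivity)]
    simp [Fin.sum_univ_two, sq_abs]
  unfold laplacian
  rw [Fin.sum_univ_two, hfun 0, hfun 1, hsd 0, hsd 1]
  have h := (hpos z).ne'
  rw [hnorm] at h ⊢
  field_simp
  ring

/-- The explicit pair `(V₁, V₂)` solves the Liouville-type system
`-ΔV₁ = μ₁e^{V₁} + βe^{(V₁+V₂)/2}`, `-ΔV₂ = μ₂e^{V₂} + βe^{(V₁+V₂)/2}` on `ℝ²`. -/
theorem liouville_system_solution (μ₁ μ₂ β : ℝ) (hμ₁ : 0 < μ₁) (hμ₂ : 0 < μ₂) (hβ : 0 < β)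
    (V₁ V₂ : EuclideanSpace ℝ (Fin 2) → ℝ)
    (hV₂ : ∀ z, V₂ z = -2 * Real.log (1 + μ₂ / 8 * (1 + β / Real.sqrt (μ₁ * μ₂)) * ‖z‖ ^ 2))
    (hV₁ : ∀ z, V₁ z = V₂ z - Real.log (μ₁ / μ₂)) :
    (∀ z, -laplacian V₁ z = μ₁ * Real.exp (V₁ z) + β * Real.exp ((V₁ z + V₂ z) / 2)) ∧
    (∀ z, -laplacian V₂ z = μ₂ * Real.exp (V₂ z) + β * Real.exp ((V₁ z + V₂ z) / 2)) := by
  set s := Real.sqrt (μ₁ * μ₂) with hs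
  have hspos : 0 < s := Real.sqrt_pos.mpr (by positivity)
  have hs2 : s ^ 2 = μ₁ * μ₂ := Real.sq_sqrt (by positivity)
  set c := μ₂ / 8 * (1 + β / s) with hcdef
  have hc : 0 < c := by
    have : 0 < 1 + β / s := by positivity
    positivity
  have hg : ∀ z : E, 0 < 1 + c * ‖z‖ ^ 2 := fun z => by positivity
  have lap2 : ∀ z : E, laplacian V₂ z = -8 * c / (1 + c * ‖z‖ ^ 2) ^ 2 :=
    fun z => aux_lap c hc V₂ hV₂ z
  have hV1e : V₁ = fun w => V₂ w - Real.log (μ₁ / μ₂) := funext hV₁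
  have lap1 : ∀ z : E, laplacian V₁ z = laplacian V₂ z := by
    intro z
    unfold laplacian
    refine Finset.sum_congr rfl fun i _ => ?_
    have : (fun w => fderiv ℝ V₁ w (EuclideanSpace.single i 1))
        = fun w => fderiv ℝ V₂ w (EuclideanSpace.single i 1) := by
      funext w
      rw [hV1e, fderiv_sub_const]
    rw [this]
  have e2 : ∀ z : E, Real.exp (V₂ z) = ((1 + c * ‖z‖ ^ 2) ^ 2)⁻¹ := by
    intro z
    rw [hV₂ z,
      show (-2 : ℝ) * Real.log (1 + c * ‖z‖ ^ 2)
        = -(Real.log ((1 + c * ‖z‖ ^ 2) ^ 2)) by rw [Real.log_pow]; push_cast; ring,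
      Real.exp_neg, Real.exp_log (by positivity)]
  have e1 : ∀ z : E, Real.exp (V₁ z) = μ₂ / μ₁ * ((1 + c * ‖z‖ ^ 2) ^ 2)⁻¹ := by
    intro z
    rw [hV₁ z, Real.exp_sub, e2, Real.exp_log (by positivity)]
    rw [div_div_eq_mul_div]
    ring
  have ht : Real.exp (Real.log (μ₁ / μ₂) / 2) = s / μ₂ := by
    rw [← sq_eq_sq₀ (Real.exp_pos _).le (by positivity)]
    rw [sq, ← Real.exp_add, add_halves, Real.exp_log (by positivity), div_pow, hs2,
      div_eq_div_iff (by positivity) (by positivity)]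
    ring
  have emix : ∀ z : E, Real.exp ((V₁ z + V₂ z) / 2)
      = μ₂ / s * ((1 + c * ‖z‖ ^ 2) ^ 2)⁻¹ := by
    intro z
    rw [show (V₁ z + V₂ z) / 2 = V₂ z - Real.log (μ₁ / μ₂) / 2 by rw [hV₁ z]; ring,
      Real.exp_sub, e2, ht]
    rw [div_div_eq_mul_div]
    ring
  constructor
  · intro z
    rw [lap1 z, lap2 z, e1, emix, hcdef]
    have := (hg z).ne'
    field_simp
  · intro z
    rw [lap2 z, e2, emix, hcdef]
    have := (hg z).ne'
    field_simp
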